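/- Let μ be a Borel measure on ℝ, finite on all compact sets, such that μ([0,∞)) < ∞ and ∫_ℝ e^{−β₀ |x|^{3/2}} dμ(x) < ∞ for some β₀ ∈ (0,1). Then for every t > 0: ∫_ℝ e^{t} · γ_t({z ∈ ℝ : x + z ≥ √2 t}) dμ(x) < ∞. -/

import Mathlib

open Real MeasureTheory ProbabilityTheory
open scoped ENNReal NNReal

lemma gaussian_tail_le {t : ℝ} (ht : 0 < t) {a : ℝ} (ha : 0 ≤ a) :
    (gaussianReal 0 t.toNNReal) (Set.Ici a)
      ≤ ENNReal.ofReal (Real.exp (-(a ^ 2) / (2 * t))) := by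
  have hv : t.toNNReal ≠ 0 := by
    simp [Real.toNNReal_eq_zero, not_le, ht]
  have hvt : ((t.toNNReal : ℝ)) = t := Real.coe_toNNReal t ht.le
  have hpt : ∀ z ∈ Set.Ici a,
      gaussianPDF 0 t.toNNReal z
        ≤ ENNReal.ofReal (Real.exp (-(a ^ 2) / (2 * t))) * gaussianPDF a t.toNNReal z := by
    intro z hz
    simp only [Set.mem_Ici] at hz
    simp only [gaussianPDF, ← ENNReal.ofReal_mul (Real.exp_nonneg _)]
    apply ENNReal.ofReal_le_ofReal
    simp only [gaussianPDFReal, hvt, sub_zero]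
    rw [mul_left_comm, ← Real.exp_add]
    apply mul_le_mul_of_nonneg_left _ (by positivity)
    apply Real.exp_le_exp.2
    have h2t : (0:ℝ) < 2 * t := by linarith
    rw [← add_div, div_le_div_iff_of_pos_right h2t]
    nlinarith [sq_nonneg (z - a), mul_nonneg ha (sub_nonneg.2 hz)]
  calc (gaussianReal 0 t.toNNReal) (Set.Ici a)
      = ∫⁻ z in Set.Ici a, gaussianPDF 0 t.toNNReal z := gaussianReal_apply 0 hv _
    _ ≤ ∫⁻ z in Set.Ici a,
          ENNReal.ofReal (Real.exp (-(a ^ 2) / (2 * t))) * gaussianPDF a t.toNNReal z :=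
        setLIntegral_mono ((measurable_gaussianPDF a _).const_mul _) hpt
    _ = ENNReal.ofReal (Real.exp (-(a ^ 2) / (2 * t)))
          * ∫⁻ z in Set.Ici a, gaussianPDF a t.toNNReal z :=
        lintegral_const_mul' _ _ ENNReal.ofReal_ne_top
    _ ≤ ENNReal.ofReal (Real.exp (-(a ^ 2) / (2 * t)))
          * ∫⁻ z, gaussianPDF a t.toNNReal z :=
        mul_le_mul_right (setLIntegral_le_lintegral _ _) _
    _ = ENNReal.ofReal (Real.exp (-(a ^ 2) / (2 * t))) := by
        rw [lintegral_gaussianPDF_eq_one a hv, mul_one]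

theorem expected_particles_on_halfline_finite
    (μ : Measure ℝ) (hloc : ∀ C : Set ℝ, IsCompact C → μ C < ⊤)
    (hpos : μ (Set.Ici (0 : ℝ)) < ⊤)
    (β₀ : ℝ) (hβ₀ : β₀ ∈ Set.Ioo (0 : ℝ) 1)
    (hint : ∫⁻ x : ℝ, ENNReal.ofReal (Real.exp (-β₀ * |x| ^ ((3 : ℝ) / 2))) ∂μ < ⊤)
    (t : ℝ) (ht : 0 < t) :
    ∫⁻ x : ℝ,
        ENNReal.ofReal (Real.exp t) *
          (gaussianReal 0 t.toNNReal) {z : ℝ | Real.sqrt 2 * t ≤ x + z} ∂μ < ⊤ := by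
  obtain ⟨hβpos, hβlt⟩ := hβ₀
  set c : ℝ := (2 * t * β₀) ^ 2 with hc
  have hcnn : 0 ≤ c := sq_nonneg _
  -- pointwise bound
  have hbound : ∀ x : ℝ,
      (gaussianReal 0 t.toNNReal) {z : ℝ | Real.sqrt 2 * t ≤ x + z}
        ≤ (Set.Ici (-c)).indicator (fun _ => (1 : ℝ≥0∞)) x
            + ENNReal.ofReal (Real.exp (-β₀ * |x| ^ ((3 : ℝ) / 2))) := by
    intro x
    have hset : {z : ℝ | Real.sqrt 2 * t ≤ x + z} = Set.Ici (Real.sqrt 2 * t - x) := by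
      ext z; simp [Set.mem_Ici, sub_le_iff_le_add, add_comm]
    rcases le_or_gt (-c) x with hx | hx
    · calc (gaussianReal 0 t.toNNReal) {z : ℝ | Real.sqrt 2 * t ≤ x + z} ≤ 1 :=
            prob_le_one
        _ ≤ _ := by
            rw [Set.indicator_of_mem (Set.mem_Ici.2 hx)]
            exact le_add_right le_rfl
    · -- x < -c ≤ 0
      have hxneg : x < 0 := lt_of_lt_of_le hx (by linarith)
      have hxabs : c < |x| := by rw [abs_of_neg hxneg]; linarith
      have hxabs0 : (0:ℝ) < |x| := abs_pos.2 hxneg.ne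
      have ha0 : 0 ≤ Real.sqrt 2 * t - x := by
        have : (0:ℝ) ≤ Real.sqrt 2 * t := by positivity
        linarith
      rw [hset]
      refine le_trans (gaussian_tail_le ht ha0) (le_trans (ENNReal.ofReal_le_ofReal ?_)
        (le_add_left le_rfl))
      apply Real.exp_le_exp.2
      -- need -(√2 t - x)^2/(2t) ≤ -β₀ |x|^{3/2}
      have hax : |x| ≤ Real.sqrt 2 * t - x := by
        have : (0:ℝ) ≤ Real.sqrt 2 * t := by positivity
        rw [abs_of_neg hxneg]; linarith
      have hsq : x ^ 2 ≤ (Real.sqrt 2 * t - x) ^ 2 := by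
        have := sq_abs x
        nlinarith [abs_nonneg x]
      have h2t : (0:ℝ) < 2 * t := by linarith
      -- β₀ |x|^{3/2} ≤ x^2 / (2t)
      have hkey : β₀ * |x| ^ ((3 : ℝ) / 2) ≤ x ^ 2 / (2 * t) := by
        have hhalf : 2 * t * β₀ ≤ |x| ^ ((1 : ℝ) / 2) := by
          rw [show ((1:ℝ)/2) = 1/2 by norm_num, ← Real.sqrt_eq_rpow]
          exact (Real.le_sqrt (by positivity) (abs_nonneg x)).2 hxabs.le
        have hxsq : |x| ^ ((3 : ℝ) / 2) * |x| ^ ((1 : ℝ) / 2) = x ^ 2 := by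
          rw [← Real.rpow_add hxabs0]
          norm_num
        rw [le_div_iff₀ h2t]
        nlinarith [Real.rpow_nonneg (abs_nonneg x) ((3:ℝ)/2), hhalf, hxsq]
      have h3 : x ^ 2 / (2 * t) ≤ (Real.sqrt 2 * t - x) ^ 2 / (2 * t) := by gcongr
      have : -((Real.sqrt 2 * t - x) ^ 2 / (2 * t)) ≤ -(β₀ * |x| ^ ((3:ℝ)/2)) := by
        linarith
      calc -(Real.sqrt 2 * t - x) ^ 2 / (2 * t)
          = -((Real.sqrt 2 * t - x) ^ 2 / (2 * t)) := by ring
        _ ≤ -(β₀ * |x| ^ ((3:ℝ)/2)) := this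
        _ = -β₀ * |x| ^ ((3:ℝ)/2) := by ring
  rw [lintegral_const_mul' _ _ ENNReal.ofReal_ne_top]
  refine ENNReal.mul_lt_top ENNReal.ofReal_lt_top ?_
  have hfin1 : μ (Set.Ici (-c)) < ⊤ := by
    have hsub : Set.Ici (-c) ⊆ Set.Icc (-c) 0 ∪ Set.Ici 0 := by
      intro y hy
      rcases le_or_gt 0 y with h | h
      · exact Or.inr h
      · exact Or.inl ⟨hy, h.le⟩
    calc μ (Set.Ici (-c)) ≤ μ (Set.Icc (-c) 0 ∪ Set.Ici 0) := measure_mono hsub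
      _ ≤ μ (Set.Icc (-c) 0) + μ (Set.Ici 0) := measure_union_le _ _
      _ < ⊤ := ENNReal.add_lt_top.2 ⟨hloc _ isCompact_Icc, hpos⟩
  calc ∫⁻ x, (gaussianReal 0 t.toNNReal) {z : ℝ | Real.sqrt 2 * t ≤ x + z} ∂μ
      ≤ ∫⁻ x, ((Set.Ici (-c)).indicator (fun _ => (1 : ℝ≥0∞)) x
          + ENNReal.ofReal (Real.exp (-β₀ * |x| ^ ((3 : ℝ) / 2)))) ∂μ :=
        lintegral_mono hbound
    _ = μ (Set.Ici (-c)) + ∫⁻ x, ENNReal.ofReal (Real.exp (-β₀ * |x| ^ ((3 : ℝ) / 2))) ∂μ := by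
        rw [lintegral_add_left (measurable_const.indicator measurableSet_Ici),
          lintegral_indicator measurableSet_Ici, setLIntegral_one]
    _ < ⊤ := ENNReal.add_lt_top.2 ⟨hfin1, hint⟩
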